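/- The border rank of the Strassen tensor T_{STR,n} (for n ≥ 1) equals exactly n + 1. -/

import Mathlib

open Matrix Filter


/-- Coordinates of the basis vector `e i` of `Fin m → ℂ`. -/
noncomputable def basisVec {m : ℕ} (i : Fin m) : Fin m → ℂ :=
  fun j => if j = i then 1 else 0

/-- The Strassen tensor `T_{STR,n}` in coordinates. -/
noncomputable def TSTR (n : ℕ) : Fin (n+1) × Fin (n+1) × Fin n → ℂ :=
  fun p => ∑ i : Fin n,
      basisVec (0 : Fin (n+1)) p.1 * basisVec i.succ p.2.1 * basisVec i p.2.2
    + ∑ i : Fin n,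
      basisVec i.succ p.1 * basisVec (0 : Fin (n+1)) p.2.1 * basisVec i p.2.2

/-- The set of tensors in `ℂ^a ⊗ ℂ^b ⊗ ℂ^c` (in coordinates) of rank at most r. -/
def rankAtMost (a b c r : ℕ) : Set (Fin a × Fin b × Fin c → ℂ) :=
  {T | ∃ (u : Fin r → Fin a → ℂ) (v : Fin r → Fin b → ℂ) (w : Fin r → Fin c → ℂ),
    T = fun p => ∑ s : Fin r, u s p.1 * v s p.2.1 * w s p.2.2}

-- auxiliary: det of a sum of r < m rank-one m×m matrices is zero
lemma det_sum_rankone {m r : ℕ} (hr : r < m) (a b : Fin r → Fin m → ℂ) :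
    Matrix.det (Matrix.of fun i j => ∑ s : Fin r, a s i * b s j) = 0 := by
  rw [← Matrix.exists_mulVec_eq_zero_iff]
  set B : Matrix (Fin r) (Fin m) ℂ := Matrix.of fun s j => b s j with hB
  have hninj : ¬ Function.Injective B.mulVecLin := by
    intro h
    have h2 := LinearMap.finrank_le_finrank_of_injective h
    simp [Module.finrank_pi] at h2
    omega
  rw [← LinearMap.ker_eq_bot] at hninj
  obtain ⟨x, hxmem, hx0⟩ := Submodule.exists_mem_ne_zero_of_ne_bot hninj
  refine ⟨x, hx0, ?_⟩
  have hBx : B *ᵥ x = 0 := hxmem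
  funext i
  have : (Matrix.of fun i j => ∑ s : Fin r, a s i * b s j) *ᵥ x
      = fun i => ∑ s : Fin r, a s i * (B *ᵥ x) s := by
    funext i
    simp only [Matrix.mulVec, dotProduct, Matrix.of_apply, hB,
      Finset.sum_mul, Finset.mul_sum]
    rw [Finset.sum_comm]
    congr 1; funext s; congr 1; funext j; ring
  rw [this, hBx]
  simp


/-- The border rank of the Strassen tensor (n ≥ 1) equals exactly n + 1: T_{STR,n}
is a limit of tensors of rank ≤ n+1, and is not a limit of tensors of rank ≤ r for
any r < n+1. -/
theorem stmt6 (n : ℕ) (hn : 1 ≤ n) :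
    TSTR n ∈ closure (rankAtMost (n+1) (n+1) n (n+1)) ∧
    ∀ r : ℕ, TSTR n ∈ closure (rankAtMost (n+1) (n+1) n r) → n + 1 ≤ r := by
  constructor
  · -- upper bound
    set g : Fin (n+1) × Fin (n+1) × Fin n → ℂ := fun p =>
      ∑ i : Fin n, basisVec i.succ p.1 * basisVec i.succ p.2.1 * basisVec i p.2.2 with hg
    have hmem : ∀ t : ℂ, t ≠ 0 →
        (fun p => TSTR n p + t * g p) ∈ rankAtMost (n+1) (n+1) n (n+1) := by
      intro t ht
      refine ⟨Fin.snoc (fun i j => basisVec 0 j + t * basisVec i.succ j) (basisVec 0),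
        Fin.snoc (fun i j => basisVec 0 j + t * basisVec i.succ j) (basisVec 0),
        Fin.snoc (fun i j => t⁻¹ * basisVec i j) (fun _ => -t⁻¹), ?_⟩
      funext p
      rw [Fin.sum_univ_castSucc]
      simp only [Fin.snoc_castSucc, Fin.snoc_last]
      have hsum : ∑ i : Fin n, basisVec i p.2.2 = 1 := by
        simp [basisVec, Finset.sum_ite_eq']
      have key : ∀ i : Fin n,
          (basisVec 0 p.1 + t * basisVec i.succ p.1) *
            (basisVec 0 p.2.1 + t * basisVec i.succ p.2.1) * (t⁻¹ * basisVec i p.2.2)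
          = t⁻¹ * (basisVec (0:Fin (n+1)) p.1 * basisVec (0:Fin (n+1)) p.2.1 * basisVec i p.2.2)
            + basisVec 0 p.1 * basisVec i.succ p.2.1 * basisVec i p.2.2
            + basisVec i.succ p.1 * basisVec 0 p.2.1 * basisVec i p.2.2
            + t * (basisVec i.succ p.1 * basisVec i.succ p.2.1 * basisVec i p.2.2) := by
        intro i; field_simp; ring
      rw [Finset.sum_congr rfl fun i _ => key i]
      simp only [Finset.sum_add_distrib, ← Finset.mul_sum, TSTR, hg]
      rw [hsum]
      ring
    refine mem_closure_of_tendsto (b := Filter.atTop) (f := fun k : ℕ =>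
      (fun p => TSTR n p + (((1:ℝ)/(k+1) : ℝ) : ℂ) * g p)) ?_ ?_
    · rw [tendsto_pi_nhds]
      intro p
      have h0 : Filter.Tendsto (fun k : ℕ => (((1:ℝ)/(k+1) : ℝ) : ℂ)) Filter.atTop (nhds 0) := by
        have := tendsto_one_div_add_atTop_nhds_zero_nat (𝕜 := ℝ)
        have := (Complex.continuous_ofReal.tendsto 0).comp this
        simpa [Function.comp_def, one_div] using this
      have := (h0.mul_const (g p)).const_add (TSTR n p)
      simpa using this
    · filter_upwards with k
      refine hmem _ ?_
      have h1 : ((1:ℝ)/(k+1)) ≠ 0 := by positivity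
      exact_mod_cast h1
  · -- lower bound
    intro r hcl
    by_contra hlt
    push_neg at hlt
    have hr : r < n + 1 := by omega
    set col : Fin (n+1) → Fin (n+1) × Fin n :=
      Fin.cases (1, ⟨0, hn⟩) (fun i => (0, i)) with hcol
    set D : (Fin (n+1) × Fin (n+1) × Fin n → ℂ) → ℂ :=
      fun T => Matrix.det (Matrix.of fun i j => T (i, col j)) with hD
    have hDcont : Continuous D := by
      apply Continuous.matrix_det
      apply continuous_matrix
      intro i j
      exact continuous_apply _
    have hDzero : ∀ T ∈ rankAtMost (n+1) (n+1) n r, D T = 0 := by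
      rintro T ⟨u, v, w, rfl⟩
      simp only [hD]
      simpa only [mul_assoc] using
        det_sum_rankone hr u (fun s j => v s (col j).1 * w s (col j).2)
    have hclosed : IsClosed {T : Fin (n+1) × Fin (n+1) × Fin n → ℂ | D T = 0} :=
      isClosed_eq hDcont continuous_const
    have hDT : D (TSTR n) = 0 :=
      (hclosed.closure_subset_iff.mpr (fun T hT => hDzero T hT)) hcl
    have hid : (Matrix.of fun i j => TSTR n (i, col j)) = (1 : Matrix (Fin (n+1)) (Fin (n+1)) ℂ) := by
      ext i j
      induction j using Fin.cases with
      | zero =>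
        simp only [TSTR, basisVec, hcol, Matrix.one_apply, Matrix.of_apply]
        simp [Finset.sum_ite_eq]
        have h1 : (1 : Fin (n+1)) = (⟨1, by omega⟩ : Fin (n+1)) := by
          apply Fin.ext; simp; omega
        have hn0 : ¬ n = 0 := by omega
        simp [← h1, hn0]
        have hs : ∑ x : Fin n, ((if (1 : Fin (n+1)) = x.succ then (1:ℂ) else 0) *
            if (⟨0, hn⟩ : Fin n) = x then 1 else 0) = 1 := by
          rw [Finset.sum_eq_single ⟨0, hn⟩]
          · have h2 : (1 : Fin (n+1)) = Fin.succ ⟨0, hn⟩ := by rw [h1]; rfl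
            rw [if_pos h2, if_pos rfl, one_mul]
          · intro b _ hb
            rw [if_neg (Ne.symm hb), mul_zero]
          · intro h; exact absurd (Finset.mem_univ _) h
        by_cases hi : i = 0
        · rw [if_pos hi, if_pos hi]; exact hs
        · rw [if_neg hi, if_neg hi]
      | succ k =>
        simp only [TSTR, basisVec, hcol, Matrix.one_apply, Matrix.of_apply]
        simp [Finset.sum_ite_eq]
        have e1 : ∀ x : Fin n, ¬ ((0 : Fin (n+1)) = x.succ) := fun x h => Fin.succ_ne_zero x h.symm
        simp only [e1, if_false, zero_mul, Finset.sum_const_zero, ite_self, zero_add]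
        rw [Finset.sum_eq_single k]
        · simp
        · intro b _ hb
          simp [Ne.symm hb]
        · simp
    simp only [hD, hid, Matrix.det_one] at hDT
    exact one_ne_zero hDT
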